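/- If x and y are positive rational numbers with x < y and x^y = y^x, then there exists a positive integer n such that x = (1 + 1/n)^n and y = (1 + 1/n)^(n+1). -/

import Mathlib

lemma aux_ineq (q : ℕ) (hq : 1 ≤ q) : ∀ a : ℕ, 2 ≤ a → q ^ a + a < (q + 1) ^ a := by
  intro a ha
  induction a with
  | zero => omega
  | succ n ih =>
    rcases Nat.lt_or_ge n 2 with hn | hn
    · have hn1 : n = 1 := by omega
      subst hn1
      ring_nf
      nlinarith
    · have h1 := ih hn
      have h2 : (1:ℕ) ≤ (q+1)^n := Nat.one_le_pow _ _ (by omega)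
      calc q ^ (n+1) + (n+1) ≤ q * (q ^ n + n) + 1 := by
            rw [pow_succ]; nlinarith
        _ < q * ((q+1)^n) + 1 := by nlinarith
        _ ≤ (q+1)^(n+1) := by rw [pow_succ]; nlinarith

lemma den_lt_num_of_one_lt (r : ℚ) (h : 1 < r) : (r.den : ℤ) < r.num := by
  have hd : (0:ℚ) < (r.den:ℚ) := by exact_mod_cast r.pos
  have h2 := (lt_div_iff₀ hd).mp (by rw [Rat.num_div_den]; exact h)
  rw [one_mul] at h2
  exact_mod_cast h2

theorem stmt_3 (x y : ℚ) (hx : 0 < x) (hxy : x < y)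
    (h : (x : ℝ) ^ (y : ℝ) = (y : ℝ) ^ (x : ℝ)) :
    ∃ n : ℕ, 0 < n ∧ x = (1 + 1 / (n : ℚ)) ^ n ∧ y = (1 + 1 / (n : ℚ)) ^ (n + 1) := by
  have hx0 : (0:ℝ) < (x:ℝ) := by exact_mod_cast hx
  have hy0q : 0 < y := lt_trans hx hxy
  have hy0 : (0:ℝ) < (y:ℝ) := by exact_mod_cast hy0q
  set t : ℚ := y / x with ht
  have hxne : (x:ℚ) ≠ 0 := ne_of_gt hx
  have ht1 : 1 < t := (one_lt_div hx).mpr hxy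
  have ht0 : 0 < t := lt_trans one_pos ht1
  have ht1R : (1:ℝ) < (t:ℝ) := by exact_mod_cast ht1
  have ht0R : (0:ℝ) < (t:ℝ) := lt_trans one_pos ht1R
  have htx : (t:ℝ) * (x:ℝ) = (y:ℝ) := by
    push_cast [ht]
    field_simp
  -- logarithmic manipulation
  have hlog : (y:ℝ) * Real.log x = (x:ℝ) * Real.log y := by
    have := congrArg Real.log h
    rwa [Real.log_rpow hx0, Real.log_rpow hy0] at this
  have hkey : ((t:ℝ) - 1) * Real.log x = Real.log t := by
    have hly : Real.log y = Real.log t + Real.log x := by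
      rw [← htx, Real.log_mul (ne_of_gt ht0R) (ne_of_gt hx0)]
    have h3 : (t:ℝ) * (x:ℝ) * Real.log x = (x:ℝ) * (Real.log t + Real.log x) := by
      rw [htx, ← hly]; exact hlog
    have hxne' : (x:ℝ) ≠ 0 := ne_of_gt hx0
    have h4 : (x:ℝ) * (((t:ℝ) - 1) * Real.log x) = (x:ℝ) * Real.log t := by
      linear_combination h3
    exact mul_left_cancel₀ hxne' h4
  have hlt : 0 < Real.log t := Real.log_pos ht1R
  have hlx : 0 < Real.log x := by
    nlinarith [hkey, sub_pos.mpr ht1R]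
  have hx1 : 1 < x := by
    have : (1:ℝ) < (x:ℝ) := (Real.log_pos_iff (le_of_lt hx0)).mp hlx
    exact_mod_cast this
  have hrt : (x:ℝ) ^ ((t:ℝ) - 1) = (t:ℝ) := by
    rw [Real.rpow_def_of_pos hx0, mul_comm, hkey, Real.exp_log ht0R]
  -- num/den of t
  set D := t.den with hD
  set N := t.num.natAbs with hN
  have hD0 : 0 < D := t.pos
  have htnum : (N:ℤ) = t.num := Int.natAbs_of_nonneg (le_of_lt (Rat.num_pos.mpr ht0))
  have hDN : D < N := by
    have := den_lt_num_of_one_lt t ht1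
    omega
  set A := N - D with hA
  have hA0 : 0 < A := by omega
  have hcop : Nat.Coprime A D := by
    rw [hA, Nat.coprime_sub_self_left (le_of_lt hDN)]
    exact t.reduced
  have hcastt : (t:ℝ) = (N:ℝ) / (D:ℝ) := by
    rw [Rat.cast_def]
    congr 1
    exact_mod_cast htnum.symm
  have hexp : ((t:ℝ) - 1) = (A:ℝ) / (D:ℝ) := by
    have hDne : ((D:ℝ)) ≠ 0 := by positivity
    rw [hcastt, hA]
    rw [Nat.cast_sub (le_of_lt hDN)]
    field_simp
  -- get rational power equation
  have hq : (x:ℚ) ^ A = t ^ D := by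
    have h2 : ((x:ℝ) ^ ((A:ℝ)/(D:ℝ))) ^ (D:ℕ) = (t:ℝ) ^ (D:ℕ) := by
      rw [← hexp, hrt]
    have hDne : ((D:ℝ)) ≠ 0 := by positivity
    rw [← Real.rpow_natCast ((x:ℝ) ^ ((A:ℝ)/(D:ℝ))) D, ← Real.rpow_mul (le_of_lt hx0),
      div_mul_cancel₀ _ hDne, Real.rpow_natCast] at h2
    exact_mod_cast h2
  obtain ⟨c, hxc, htc⟩ := (pow_eq_pow_iff_of_coprime hcop).mp hq
  -- replace c by |c|
  have hxc' : x = |c| ^ D := by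
    rw [← abs_pow, ← hxc, abs_of_pos hx]
  have htc' : t = |c| ^ A := by
    rw [← abs_pow, ← htc, abs_of_pos ht0]
  have hcne : |c| ≠ 0 := by
    intro h0
    rw [h0, zero_pow (by omega)] at hxc'
    exact hxne hxc'
  have hc1 : 1 < |c| := by
    by_contra hc
    push_neg at hc
    have : |c| ^ D ≤ 1 := pow_le_one₀ (abs_nonneg c) hc
    rw [← hxc'] at this
    linarith
  set p := (|c|).num.natAbs with hp
  set q := (|c|).den with hqd
  have hq0 : 0 < q := (|c|).pos
  have hcnum : ((p:ℤ)) = (|c|).num :=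
    Int.natAbs_of_nonneg (le_of_lt (Rat.num_pos.mpr (lt_trans one_pos hc1)))
  have hqp : (q:ℤ) < (p:ℤ) := by
    have := den_lt_num_of_one_lt _ hc1
    omega
  have hqpn : q < p := by exact_mod_cast hqp
  -- t.num and t.den in terms of p, q
  have hNp : N = p ^ A := by
    have h1 : t.num = (|c|).num ^ A := by rw [htc', Rat.num_pow]
    have : (N:ℤ) = (p:ℤ) ^ A := by rw [htnum, h1, ← hcnum]
    exact_mod_cast this
  have hDq : D = q ^ A := by
    have h1 : t.den = (|c|).den ^ A := by rw [htc', Rat.den_pow]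
    rw [hD, h1]
  have hEq : p ^ A = q ^ A + A := by
    have h1 : A = N - D := hA
    have h2 : D < N := hDN
    omega
  -- show A = 1
  have hA1 : A = 1 := by
    by_contra hAne
    have hA2 : 2 ≤ A := by omega
    have h1 : q ^ A + A < (q + 1) ^ A := aux_ineq q hq0 A hA2
    have h2 : (q + 1) ^ A ≤ p ^ A := Nat.pow_le_pow_left (by omega) A
    omega
  have hpq1 : p = q + 1 := by
    rw [hA1] at hEq
    simpa using hEq
  have hDq' : D = q := by rw [hDq, hA1, pow_one]
  -- c = 1 + 1/q
  have hcval : |c| = 1 + 1 / (q:ℚ) := by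
    have h1 : |c| = ((|c|).num : ℚ) / ((|c|).den : ℚ) := (Rat.num_div_den _).symm
    have hqne : ((q:ℚ)) ≠ 0 := by positivity
    rw [h1, ← hcnum, hpq1]
    push_cast
    field_simp
    rw [hqd]
  refine ⟨q, hq0, ?_, ?_⟩
  · rw [← hcval, ← hDq', hxc']
  · have hyx : y = t * x := by
      rw [ht]; field_simp
    rw [hyx, htc', hA1, pow_one, hxc', hDq', ← pow_succ', hcval]
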